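/- Fix a terminating ARRIVAL instance A and S = {v_1,...,v_k} ⊆ V. Define F : ℕ^k → ℕ^k by F(w)_i = x̂⁻(v_i), where x̂ is the (unique, choice-independent) Multi-Run profile for input w and x̂⁻(v_i) is the total flow into v_i. Then F is monotone: w ≤ w' componentwise implies F(w) ≤ F(w') componentwise. -/

import Mathlib

variable {V : Type} [Fintype V] [DecidableEq V]

/-- An ARRIVAL instance: origin `o` and two successor functions into `V ⊕ Bool`,
where `Sum.inr false` is the destination `d` and `Sum.inr true` is `d̄`. -/
structure Arrival (V : Type) where
  o : V
  sEven : V → V ⊕ Bool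
  sOdd : V → V ⊕ Bool

/-- Destination predicate. -/
def DestP {V : Type} : V ⊕ Bool → Prop := fun u => ∃ t, u = Sum.inr t

/-- Edge relation of the switch graph (proper edges only). -/
def Arrival.Edge (A : Arrival V) (u w : V ⊕ Bool) : Prop :=
  ∃ x : V, u = Sum.inl x ∧ (w = A.sEven x ∨ w = A.sOdd x)

/-- There is a directed walk of length `m` from `u` to a vertex satisfying `P`. -/
def Arrival.PathLen (A : Arrival V) (u : V ⊕ Bool) (P : V ⊕ Bool → Prop) (m : ℕ) : Prop :=
  ∃ f : ℕ → V ⊕ Bool, f 0 = u ∧ P (f m) ∧ ∀ i < m, A.Edge (f i) (f (i + 1))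

/-- `m` is the length of a shortest directed path from `u` to a vertex satisfying `P`. -/
def Arrival.ShortestLen (A : Arrival V) (u : V ⊕ Bool) (P : V ⊕ Bool → Prop) (m : ℕ) : Prop :=
  A.PathLen u P m ∧ ∀ m' < m, ¬ A.PathLen u P m'

/-- The instance is terminating: from every vertex a destination is reachable. -/
def Arrival.Terminating (A : Arrival V) : Prop :=
  ∀ v : V, ∃ m, A.PathLen (Sum.inl v) DestP m

/-- One step of the run procedure on states (position, switch configuration);
`false` means the current successor is the even one. Destinations are absorbing. -/
def Arrival.runStep [DecidableEq V] (A : Arrival V) :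
    (V ⊕ Bool) × (V → Bool) → (V ⊕ Bool) × (V → Bool) := fun s =>
  match s.1 with
  | Sum.inr _ => s
  | Sum.inl v => ((if s.2 v then A.sOdd v else A.sEven v),
      fun u => if u = v then !s.2 v else s.2 u)

/-- The state of the run procedure after `k` proper steps (the train starts at `o`). -/
def Arrival.run [DecidableEq V] (A : Arrival V) (k : ℕ) : (V ⊕ Bool) × (V → Bool) :=
  A.runStep^[k] (Sum.inl A.o, fun _ => false)

/-- A flow on the edges of the switch graph: value on the yard edge `(Y,o)` and on
the even/odd edge slot out of each vertex. -/
structure SFlow (V : Type) where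
  yard : ℕ
  ev : V → ℕ
  od : V → ℕ

/-- Outflow `x⁺(v)` at a vertex `v ∈ V`. -/
def SFlow.out {V : Type} (x : SFlow V) (v : V) : ℕ := x.ev v + x.od v

/-- Inflow `x⁻(u)` at a vertex `u` of the switch graph. -/
def SFlow.into (A : Arrival V) (x : SFlow V) (u : V ⊕ Bool) : ℕ :=
  (if Sum.inl A.o = u then x.yard else 0) +
    ∑ v : V, ((if A.sEven v = u then x.ev v else 0) + (if A.sOdd v = u then x.od v else 0))

/-- Total flow `Σ_e x_e`. -/
def SFlow.total [Fintype V] (x : SFlow V) : ℕ := x.yard + ∑ v : V, (x.ev v + x.od v)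

/-- Switching flow: unit outflow at the yard, flow conservation at every `v ∈ V`,
and switching behavior `x_{(v,s_even(v))} - x_{(v,s_odd(v))} ∈ {0,1}`. -/
def IsSwitchingFlow (A : Arrival V) (x : SFlow V) : Prop :=
  x.yard = 1 ∧ (∀ v : V, x.out v = SFlow.into A x (Sum.inl v)) ∧
    ∀ v : V, x.od v ≤ x.ev v ∧ x.ev v ≤ x.od v + 1

/-- Candidate switching flow w.r.t. `S` and prescribed outflows `w`. -/
def IsCandFlow (A : Arrival V) (S : Finset V) (w : V → ℕ) (x : SFlow V) : Prop :=
  x.yard = 1 ∧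
  (∀ v : V, v ∉ S → x.out v = SFlow.into A x (Sum.inl v)) ∧
  (∀ v ∈ S, x.out v = w v) ∧
  ∀ v : V, x.od v ≤ x.ev v ∧ x.ev v ≤ x.od v + 1

/-- Flow determined by outflow values, splitting per the switching rule. -/
def flowOf (t : V → ℕ) : SFlow V := ⟨1, fun v => (t v + 1) / 2, fun v => t v / 2⟩

/-- The operator whose least fixed point gives the minimal candidate flow. -/
def Gop (A : Arrival V) (S : Finset V) (w : V → ℕ) (t : V → ℕ) : V → ℕ := fun v =>
  if v ∈ S then w v else SFlow.into A (flowOf t) (Sum.inl v)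

lemma into_mono (A : Arrival V) (x y : SFlow V) (hy : x.yard ≤ y.yard)
    (hev : ∀ v, x.ev v ≤ y.ev v) (hod : ∀ v, x.od v ≤ y.od v) (u : V ⊕ Bool) :
    SFlow.into A x u ≤ SFlow.into A y u := by
  unfold SFlow.into
  refine add_le_add ?_ (Finset.sum_le_sum fun v _ => add_le_add ?_ ?_) <;>
    split_ifs <;> simp [hy, hev, hod]

lemma flowOf_mono {t t' : V → ℕ} (h : ∀ v, t v ≤ t' v) :
    (∀ v, (flowOf t).ev v ≤ (flowOf t').ev v) ∧ (∀ v, (flowOf t).od v ≤ (flowOf t').od v) := by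
  constructor <;> intro v <;> simp only [flowOf]
  · exact Nat.div_le_div_right (Nat.add_le_add_right (h v) 1)
  · exact Nat.div_le_div_right (h v)

lemma Gop_mono (A : Arrival V) (S : Finset V) {w w' t t' : V → ℕ}
    (hw : ∀ v ∈ S, w v ≤ w' v) (ht : ∀ v, t v ≤ t' v) (v : V) :
    Gop A S w t v ≤ Gop A S w' t' v := by
  unfold Gop
  split_ifs with h
  · exact hw v h
  · exact into_mono A (flowOf t) (flowOf t') le_rfl (flowOf_mono ht).1 (flowOf_mono ht).2 _

lemma flowOf_out (t : V → ℕ) (v : V) : (flowOf t).out v = t v := by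
  simp only [flowOf, SFlow.out]; omega

lemma cand_of_fix (A : Arrival V) (S : Finset V) (w t : V → ℕ)
    (h : ∀ v, Gop A S w t v = t v) : IsCandFlow A S w (flowOf t) := by
  refine ⟨rfl, fun v hv => ?_, fun v hv => ?_, fun v => ?_⟩
  · rw [flowOf_out, ← h v]
    simp [Gop, hv]
  · rw [flowOf_out, ← h v]
    simp [Gop, hv]
  · simp only [flowOf]; omega

lemma eq_flowOf_out (x : SFlow V) (hy : x.yard = 1)
    (hs : ∀ v : V, x.od v ≤ x.ev v ∧ x.ev v ≤ x.od v + 1) : x = flowOf x.out := by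
  obtain ⟨ya, ev, od⟩ := x
  simp only [flowOf, SFlow.out] at *
  simp only [SFlow.mk.injEq]
  refine ⟨hy, ?_, ?_⟩ <;> funext v <;> have h2 := hs v <;>
    omega

lemma fix_of_cand (A : Arrival V) (S : Finset V) (w : V → ℕ) (x : SFlow V)
    (h : IsCandFlow A S w x) (v : V) : Gop A S w x.out v = x.out v := by
  obtain ⟨hy, hc, hw, hs⟩ := h
  unfold Gop
  split_ifs with hv
  · exact (hw v hv).symm
  · rw [← eq_flowOf_out x hy hs]
    exact (hc v hv).symm

/-- Monotonicity of `F`: if `x` resp. `x'` are the minimal candidate switching flows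
for outflow guesses `w ≤ w'`, then the inflows at the vertices of `S` are monotone. -/

theorem multirun_inflow_monotone (A : Arrival V) (hA : A.Terminating)
    (S : Finset V) (w w' : V → ℕ) (x x' : SFlow V)
    (hx : IsCandFlow A S w x)
    (hxmin : ∀ y : SFlow V, IsCandFlow A S w y → ∀ v : V, x.ev v ≤ y.ev v ∧ x.od v ≤ y.od v)
    (hx' : IsCandFlow A S w' x')
    (hx'min : ∀ y : SFlow V, IsCandFlow A S w' y → ∀ v : V, x'.ev v ≤ y.ev v ∧ x'.od v ≤ y.od v)
    (hw : ∀ v ∈ S, w v ≤ w' v) :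
    ∀ v ∈ S, SFlow.into A x (Sum.inl v) ≤ SFlow.into A x' (Sum.inl v) := by
  classical
  -- `t'` = outflows of `x'`, a fixed point of `Gop A S w'`.
  set t' : V → ℕ := x'.out with ht'def
  have ht'fix : ∀ v, Gop A S w' t' v = t' v := fix_of_cand A S w' x' hx'
  -- `Gop A S w` maps `[0, t']` into itself.
  have hGt' : ∀ v, Gop A S w t' v ≤ t' v := fun v =>
    le_of_le_of_eq (Gop_mono A S hw (fun _ => le_rfl) v) (ht'fix v)
  -- the iteration sequence
  set seq : ℕ → V → ℕ := fun n => (Gop A S w)^[n] (fun _ => 0) with hseq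
  have hstep : ∀ n, seq (n + 1) = Gop A S w (seq n) := fun n => by
    simp [hseq, Function.iterate_succ_apply']
  have hle : ∀ n v, seq n v ≤ t' v := by
    intro n
    induction n with
    | zero => intro v; simp [hseq]
    | succ n ih =>
      intro v
      rw [hstep]
      exact le_trans (Gop_mono A S (fun _ _ => le_rfl) ih v) (hGt' v)
  have hmono : ∀ n v, seq n v ≤ seq (n + 1) v := by
    intro n
    induction n with
    | zero => intro v; simp [hseq]
    | succ n ih =>
      intro v
      rw [hstep, hstep]
      exact Gop_mono A S (fun _ _ => le_rfl) ih v
  -- the sequence stabilizes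
  have hstab : ∃ N, ∀ v, seq (N + 1) v = seq N v := by
    by_contra hcon
    push_neg at hcon
    set B : ℕ := ∑ v : V, t' v with hB
    have hT : ∀ n, n ≤ ∑ v : V, seq n v := by
      intro n
      induction n with
      | zero => exact Nat.zero_le _
      | succ n ih =>
        obtain ⟨v, hv⟩ := hcon n
        have : ∑ u : V, seq n u < ∑ u : V, seq (n + 1) u :=
          Finset.sum_lt_sum (fun u _ => hmono n u)
            ⟨v, Finset.mem_univ v, lt_of_le_of_ne (hmono n v) (Ne.symm hv)⟩
        omega
    have h1 := hT (B + 1)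
    have h2 : ∑ v : V, seq (B + 1) v ≤ B := Finset.sum_le_sum fun v _ => hle (B + 1) v
    omega
  obtain ⟨N, hN⟩ := hstab
  have hfix : ∀ v, Gop A S w (seq N) v = seq N v := by
    intro v
    rw [← hstep N] at *
    exact hN v
  -- `flowOf (seq N)` is a candidate flow for `w`, below `x'`
  have hcand : IsCandFlow A S w (flowOf (seq N)) := cand_of_fix A S w (seq N) hfix
  have hx'eq : x' = flowOf t' := eq_flowOf_out x' hx'.1 hx'.2.2.2
  have hxle : (∀ v, x.ev v ≤ x'.ev v) ∧ (∀ v, x.od v ≤ x'.od v) := by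
    constructor <;> intro v
    · calc x.ev v ≤ (flowOf (seq N)).ev v := (hxmin _ hcand v).1
        _ ≤ (flowOf t').ev v := (flowOf_mono (hle N)).1 v
        _ = x'.ev v := by rw [← hx'eq]
    · calc x.od v ≤ (flowOf (seq N)).od v := (hxmin _ hcand v).2
        _ ≤ (flowOf t').od v := (flowOf_mono (hle N)).2 v
        _ = x'.od v := by rw [← hx'eq]
  intro v _
  exact into_mono A x x' (by rw [hx.1, hx'.1]) hxle.1 hxle.2 _
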